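/- Let f : X → X be a homeomorphism of an infinite compact metric space. Then for every δ > 0 there exist distinct points x₁, x₂ ∈ X with dist(f^k(x₁), f^k(x₂)) < δ for all k ≥ 0, and distinct points y₁, y₂ ∈ X with dist(f^k(y₁), f^k(y₂)) < δ for all k ≤ 0. -/

import Mathlib

variable {X : Type*} [MetricSpace X]

/-- The `k`-th iterate (`k ∈ ℤ`) of a homeomorphism, as a function. -/
noncomputable def hiter (f : X ≃ₜ X) (k : ℤ) : X → X := ⇑(f.toEquiv ^ k)

/-- A set is `δ`-separated if distinct points are at distance `> δ`. -/
def IsSeparated' (δ : ℝ) (B : Set X) : Prop :=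
  ∀ x ∈ B, ∀ y ∈ B, x ≠ y → δ < dist x y

/-- The `δ`-cardinality of a set: sup of cardinalities of `δ`-separated subsets. -/
noncomputable def dCard (δ : ℝ) (A : Set X) : ℕ∞ :=
  ⨆ B ∈ {B : Set X | B ⊆ A ∧ IsSeparated' δ B}, B.encard

/-- `(m,n)`-expansiveness with a given expansive constant `δ`. -/
def MNExpansiveWith (f : X ≃ₜ X) (m n : ℕ) (δ : ℝ) : Prop :=
  ∀ A : Set X, A.encard = m → ∃ k : ℤ, (n : ℕ∞) < dCard δ (hiter f k '' A)

/-- `(m,n)`-expansiveness. -/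
def MNExpansive (f : X ≃ₜ X) (m n : ℕ) : Prop :=
  ∃ δ > 0, MNExpansiveWith f m n δ

open Filter Topology Metric Set Function
private lemma unifc (F : X → X) [CompactSpace X] (hF : Continuous F) {ε : ℝ} (hε : 0 < ε) :
    ∃ ρ > 0, ∀ x y : X, dist x y < ρ → dist (F x) (F y) < ε := by
  obtain ⟨ρ, hρ, h⟩ := Metric.uniformContinuous_iff.mp
    (CompactSpace.uniformContinuous_of_continuous hF) ε hε
  exact ⟨ρ, hρ, fun x y hxy => h hxy⟩

lemma exists_forward_close [CompactSpace X] [Infinite X] (g : X ≃ₜ X) {c : ℝ} (hc : 0 < c) :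
    ∃ x y : X, x ≠ y ∧ ∀ n : ℕ, dist ((⇑g)^[n] x) ((⇑g)^[n] y) ≤ c := by
  by_contra hcon
  push_neg at hcon
  -- hcon : ∀ x y, x ≠ y → ∃ n, c < dist (g^[n] x) (g^[n] y)
  -- Step 1 : uniform expansivity
  have unifexp : ∀ ε > (0:ℝ), ∃ N : ℕ, ∀ x y : X,
      (∀ k ≤ N, dist ((⇑g)^[k] x) ((⇑g)^[k] y) ≤ c) → dist x y < ε := by
    intro ε hε
    by_contra hN
    push_neg at hN
    choose u v hw hd using hN
    obtain ⟨⟨a, b⟩, -, φ, hφ, hlim⟩ :=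
      isCompact_univ.tendsto_subseq (x := fun n => (u n, v n)) (fun n => mem_univ _)
    have hu : Tendsto (fun n => u (φ n)) atTop (𝓝 a) :=
      (continuous_fst.tendsto (a, b)).comp hlim
    have hv : Tendsto (fun n => v (φ n)) atTop (𝓝 b) :=
      (continuous_snd.tendsto (a, b)).comp hlim
    have hab : ε ≤ dist a b := by
      refine ge_of_tendsto (hu.dist hv) ?_
      exact Eventually.of_forall fun n => hd (φ n)
    have hbound : ∀ k : ℕ, dist ((⇑g)^[k] a) ((⇑g)^[k] b) ≤ c := by
      intro k
      have hdk : Tendsto (fun n => dist ((⇑g)^[k] (u (φ n))) ((⇑g)^[k] (v (φ n)))) atTop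
          (𝓝 (dist ((⇑g)^[k] a) ((⇑g)^[k] b))) :=
        ((((g.continuous.iterate k).tendsto a).comp hu).dist
          (((g.continuous.iterate k).tendsto b).comp hv))
      refine le_of_tendsto hdk ?_
      filter_upwards [eventually_ge_atTop k] with n hn
      exact hw (φ n) k (hn.trans (hφ.le_apply))
    obtain ⟨n, hn⟩ := hcon a b (fun h => by
      rw [h] at hab; simp at hab; linarith)
    exact absurd (hbound n) (not_le.mpr hn)
  -- Step 1b : windows of uniform continuity
  have window : ∀ N : ℕ, ∃ ρ > (0:ℝ), ∀ x y : X, dist x y < ρ →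
      ∀ k ≤ N, dist ((⇑g)^[k] x) ((⇑g)^[k] y) ≤ c := by
    intro N
    induction N with
    | zero =>
      refine ⟨c, hc, fun x y h k hk => ?_⟩
      interval_cases k
      simpa using h.le
    | succ N ih =>
      obtain ⟨ρ, hρ, hwin⟩ := ih
      obtain ⟨ρ₂, hρ₂, h2⟩ := unifc ((⇑g)^[N+1]) (g.continuous.iterate (N+1)) hc
      refine ⟨min ρ ρ₂, lt_min hρ hρ₂, fun x y h k hk => ?_⟩
      rcases Nat.lt_succ_iff_lt_or_eq.mp (Nat.lt_succ_of_le hk) with h' | h'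
      · exact hwin x y (h.trans_le (min_le_left _ _)) k (Nat.lt_succ_iff.mp h')
      · subst h'
        exact (h2 x y (h.trans_le (min_le_right _ _))).le
  -- Step 2 : backward equicontinuity
  have backward : ∀ ε : ℝ, 0 < ε → ε ≤ c → ∃ ρ > (0:ℝ), ∀ x y : X, dist x y < ρ →
      ∀ j : ℕ, dist ((⇑g.symm)^[j] x) ((⇑g.symm)^[j] y) ≤ ε := by
    intro ε hε hεc
    obtain ⟨η, hη, hηc⟩ := unifc (⇑g.symm) g.symm.continuous hc
    set ε₁ := min ε η / 2 with hε₁def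
    have hε₁ : 0 < ε₁ := by positivity
    obtain ⟨N, hNp⟩ := unifexp ε₁ hε₁
    obtain ⟨ρ, hρ, hwin⟩ := window N
    refine ⟨ρ, hρ, fun x y hxy => ?_⟩
    have key : ∀ j : ℕ, ∀ k ≤ N,
        dist ((⇑g)^[k] ((⇑g.symm)^[j] x)) ((⇑g)^[k] ((⇑g.symm)^[j] y)) ≤ c := by
      intro j
      induction j with
      | zero => simpa using hwin x y hxy
      | succ j ih =>
        intro k hk
        have hsmall : dist ((⇑g.symm)^[j] x) ((⇑g.symm)^[j] y) < ε₁ := hNp _ _ ih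
        match k with
        | 0 =>
          have hη' : dist ((⇑g.symm)^[j] x) ((⇑g.symm)^[j] y) < η := by
            refine hsmall.trans_le ?_
            rw [hε₁def]
            have := min_le_right ε η
            linarith
          have := hηc _ _ hη'
          simpa [Function.iterate_succ_apply'] using this.le
        | k + 1 =>
          have e1 : ∀ z : X, (⇑g)^[k+1] ((⇑g.symm)^[j+1] z) = (⇑g)^[k] ((⇑g.symm)^[j] z) := by
            intro z
            rw [Function.iterate_succ_apply' (⇑g.symm) j z, Function.iterate_succ_apply (⇑g) k,
              Homeomorph.apply_symm_apply]
          rw [e1 x, e1 y]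
          exact ih k (le_trans (Nat.le_succ k) hk)
    intro j
    have h1 : dist ((⇑g.symm)^[j] x) ((⇑g.symm)^[j] y) < ε₁ := hNp _ _ (key j)
    refine h1.le.trans ?_
    rw [hε₁def]
    have := min_le_left ε η
    linarith
  -- Step 3 : uniform almost-periodicity along a subsequence
  obtain ⟨ρ₀, hρ₀, hback⟩ := backward (c/8) (by positivity) (by linarith)
  obtain ⟨t, -, htf, htc⟩ := finite_cover_balls_of_compact (X := X) isCompact_univ hρ₀
  haveI : Fintype t := htf.fintype
  let seq : ℕ → (↥t → X) := fun j z => (⇑g.symm)^[j] (z : X)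
  obtain ⟨L, -, φ, hφ, hL⟩ :=
    isCompact_univ.tendsto_subseq (x := seq) (fun n => mem_univ _)
  obtain ⟨M, hM⟩ := (Metric.tendsto_atTop.mp hL) (c/16) (by positivity)
  set m := φ M with hm
  -- uniform estimate between times m and φ i
  have stepA : ∀ i ≥ M, ∀ w : X,
      dist ((⇑g.symm)^[m] w) ((⇑g.symm)^[φ i] w) ≤ 3 * (c/8) := by
    intro i hi w
    obtain ⟨z, hzt, hz⟩ := by
      have := htc (mem_univ w)
      simpa using this
    have hwz : ∀ j : ℕ, dist ((⇑g.symm)^[j] w) ((⇑g.symm)^[j] z) ≤ c/8 :=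
      hback w z hz
    have hz1 : dist ((⇑g.symm)^[m] z) (L ⟨z, hzt⟩) < c/16 := by
      have := hM M le_rfl
      calc dist ((⇑g.symm)^[m] z) (L ⟨z, hzt⟩)
          ≤ dist (seq (φ M)) L := dist_le_pi_dist (seq (φ M)) L ⟨z, hzt⟩
        _ < c/16 := this
    have hz2 : dist ((⇑g.symm)^[φ i] z) (L ⟨z, hzt⟩) < c/16 := by
      have := hM i hi
      calc dist ((⇑g.symm)^[φ i] z) (L ⟨z, hzt⟩)
          ≤ dist (seq (φ i)) L := dist_le_pi_dist (seq (φ i)) L ⟨z, hzt⟩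
        _ < c/16 := this
    calc dist ((⇑g.symm)^[m] w) ((⇑g.symm)^[φ i] w)
        ≤ dist ((⇑g.symm)^[m] w) ((⇑g.symm)^[m] z) +
          dist ((⇑g.symm)^[m] z) ((⇑g.symm)^[φ i] z) +
          dist ((⇑g.symm)^[φ i] z) ((⇑g.symm)^[φ i] w) := dist_triangle4 _ _ _ _
      _ ≤ c/8 + (c/16 + c/16) + c/8 := by
          gcongr
          · exact hwz m
          · calc dist ((⇑g.symm)^[m] z) ((⇑g.symm)^[φ i] z)
                ≤ dist ((⇑g.symm)^[m] z) (L ⟨z, hzt⟩) + dist (L ⟨z, hzt⟩) ((⇑g.symm)^[φ i] z) :=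
                  dist_triangle _ _ _
              _ ≤ c/16 + c/16 := by
                  rw [dist_comm (L ⟨z, hzt⟩)]
                  exact add_le_add hz1.le hz2.le
          · rw [dist_comm]; exact hwz (φ i)
      _ = 3 * (c/8) := by ring
  have hlinv : Function.LeftInverse (⇑g.symm) ⇑g := g.symm_apply_apply
  have stepB : ∀ i ≥ M, ∀ u : X, dist u ((⇑g.symm)^[φ i - m] u) ≤ 3 * (c/8) := by
    intro i hi u
    have hmi : m ≤ φ i := hφ.monotone hi
    have e1 : (⇑g.symm)^[m] ((⇑g)^[m] u) = u := (hlinv.iterate m) u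
    have e2 : (⇑g.symm)^[φ i] ((⇑g)^[m] u) = (⇑g.symm)^[φ i - m] u := by
      conv_lhs => rw [← Nat.sub_add_cancel hmi]
      rw [Function.iterate_add_apply, e1]
    have := stepA i hi ((⇑g)^[m] u)
    rwa [e1, e2] at this
  -- Step 4 : a pair of close distinct points exists
  have hpair : ∃ x y : X, x ≠ y ∧ dist x y < ρ₀ := by
    by_contra h
    push_neg at h
    obtain ⟨t₂, -, ht₂f, hcov⟩ := finite_cover_balls_of_compact (X := X) isCompact_univ
      (show (0:ℝ) < ρ₀/2 by positivity)
    have : (Set.univ : Set X).Finite := by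
      refine Set.Finite.subset (Set.Finite.biUnion ht₂f
        (fun z _ => Set.Subsingleton.finite ?_)) hcov
      intro u hu v hv
      by_contra hne
      have := h u v hne
      have : dist u v < ρ₀ := by
        calc dist u v ≤ dist u z + dist z v := dist_triangle _ _ _
          _ < ρ₀/2 + ρ₀/2 := by
              rw [dist_comm z v]
              exact add_lt_add hu hv
          _ = ρ₀ := by ring
      linarith [h u v hne]
    exact Set.infinite_univ this
  obtain ⟨x, y, hxy, hclose⟩ := hpair
  have hbxy : ∀ j : ℕ, dist ((⇑g.symm)^[j] x) ((⇑g.symm)^[j] y) ≤ c/8 := hback x y hclose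
  -- Step 5 : contradiction
  obtain ⟨n, hn⟩ := hcon x y hxy
  -- pick i with φ i - m ≥ n
  have hgap : ∀ j : ℕ, φ (M + j) - m ≥ j := by
    intro j
    have : φ M + j ≤ φ (M + j) := by
      induction j with
      | zero => simp
      | succ j ih =>
        have h1 : φ (M + j) < φ (M + (j + 1)) := hφ (by omega)
        omega
    omega
  set i := M + n with hi
  set k := φ i - m with hkdef
  have hkn : n ≤ k := hgap n
  have hiM : M ≤ i := Nat.le_add_right M n
  have e3 : ∀ z : X, (⇑g.symm)^[k] ((⇑g)^[n] z) = (⇑g.symm)^[k - n] z := by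
    intro z
    conv_lhs => rw [show k = (k - n) + n by omega]
    rw [Function.iterate_add_apply, (hlinv.iterate n) z]
  have hfinal : dist ((⇑g)^[n] x) ((⇑g)^[n] y) ≤ 7 * (c/8) := by
    have hBx := stepB i hiM ((⇑g)^[n] x)
    have hBy := stepB i hiM ((⇑g)^[n] y)
    rw [← hkdef] at hBx hBy
    rw [e3 x] at hBx
    rw [e3 y] at hBy
    calc dist ((⇑g)^[n] x) ((⇑g)^[n] y)
        ≤ dist ((⇑g)^[n] x) ((⇑g.symm)^[k-n] x) +
          dist ((⇑g.symm)^[k-n] x) ((⇑g.symm)^[k-n] y) +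
          dist ((⇑g.symm)^[k-n] y) ((⇑g)^[n] y) := dist_triangle4 _ _ _ _
      _ ≤ 3 * (c/8) + c/8 + 3 * (c/8) := by
          refine add_le_add (add_le_add hBx (hbxy (k-n))) ?_
          rw [dist_comm]; exact hBy
      _ = 7 * (c/8) := by ring
  linarith

lemma hiter_coe_nat (f : X ≃ₜ X) (n : ℕ) : hiter f (n : ℤ) = (⇑f)^[n] := by
  unfold hiter
  rw [zpow_natCast, ← Equiv.Perm.iterate_eq_pow]
  rfl

lemma hiter_neg_nat (f : X ≃ₜ X) (n : ℕ) : hiter f (-(n : ℤ)) = (⇑f.symm)^[n] := by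
  unfold hiter
  rw [zpow_neg, zpow_natCast, ← inv_pow, Equiv.Perm.inv_def, ← Equiv.Perm.iterate_eq_pow]
  rw [f.coe_symm_toEquiv]


theorem stmt11 [CompactSpace X] [Infinite X] (f : X ≃ₜ X) :
    ∀ δ > 0,
      (∃ x₁ x₂ : X, x₁ ≠ x₂ ∧
        ∀ k : ℤ, 0 ≤ k → dist (hiter f k x₁) (hiter f k x₂) < δ) ∧
      (∃ y₁ y₂ : X, y₁ ≠ y₂ ∧
        ∀ k : ℤ, k ≤ 0 → dist (hiter f k y₁) (hiter f k y₂) < δ) := by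
  intro δ hδ
  have hδ2 : (0:ℝ) < δ/2 := by linarith
  obtain ⟨x, y, hxy, hb⟩ := exists_forward_close f hδ2
  obtain ⟨u, v, huv, hb2⟩ := exists_forward_close f.symm hδ2
  constructor
  · refine ⟨x, y, hxy, fun k hk => ?_⟩
    have : k = ((k.toNat : ℕ) : ℤ) := (Int.toNat_of_nonneg hk).symm
    rw [this, hiter_coe_nat]
    calc dist ((⇑f)^[k.toNat] x) ((⇑f)^[k.toNat] y) ≤ δ/2 := hb k.toNat
      _ < δ := by linarith
  · refine ⟨u, v, huv, fun k hk => ?_⟩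
    have : k = -(((-k).toNat : ℕ) : ℤ) := by
      rw [Int.toNat_of_nonneg (by linarith : (0:ℤ) ≤ -k)]; ring
    rw [this, hiter_neg_nat]
    calc dist ((⇑f.symm)^[(-k).toNat] u) ((⇑f.symm)^[(-k).toNat] v) ≤ δ/2 := hb2 (-k).toNat
      _ < δ := by linarith
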